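/- Let G have n vertices and let the edge weights be w(e) = 2 for e ∈ M and w(e) = 0 for e ∉ M. Suppose every edge of G is dominated and every edge of M is tight (with respect to y, 𝓑 and z). If G contains an augmenting path with free endpoints f₁ and f₂, then y(f₁) + y(f₂) ≥ 2 − n; in particular, if y takes the common value y_f on all free vertices, then y_f ≥ 1 − n/2. -/

import Mathlib

open SimpleGraph

attribute [local instance] Classical.propDecidable

variable {V : Type*}

def IsMatchingSet (G : SimpleGraph V) (M : Finset (Sym2 V)) : Prop :=
  (∀ e ∈ M, e ∈ G.edgeSet) ∧
    ∀ e ∈ M, ∀ f ∈ M, e ≠ f → ∀ v : V, v ∈ e → v ∉ f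

def IsFree (M : Finset (Sym2 V)) (v : V) : Prop := ∀ e ∈ M, v ∉ e

def IsAlternating (M : Finset (Sym2 V)) {G : SimpleGraph V} {u v : V}
    (P : G.Walk u v) : Prop :=
  List.Chain' (fun e f => ¬(e ∈ M ↔ f ∈ M)) P.edges

def IsAugmenting (M : Finset (Sym2 V)) {G : SimpleGraph V} {f₁ f₂ : V}
    (P : G.Walk f₁ f₂) : Prop :=
  P.IsPath ∧ f₁ ≠ f₂ ∧ IsFree M f₁ ∧ IsFree M f₂ ∧ IsAlternating M P

noncomputable def pathWeight (w : Sym2 V → ℝ) (M : Finset (Sym2 V)) {G : SimpleGraph V}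
    {u v : V} (P : G.Walk u v) : ℝ :=
  ((P.edges.filter fun e => e ∉ M).map w).sum -
    ((P.edges.filter fun e => e ∈ M).map w).sum

def InternallyNearMatched (M : Finset (Sym2 V)) (B : Finset V) (b : V) : Prop :=
  b ∈ B ∧ (∀ v ∈ B, s(b, v) ∉ M) ∧
    ∀ v ∈ B, v ≠ b → ∃ u ∈ B, u ≠ v ∧ s(u, v) ∈ M

noncomputable def dualLoad (y : V → ℝ) (𝓑 : Finset (Finset V)) (z : Finset V → ℝ)
    (u v : V) : ℝ :=
  y u + y v + ∑ B ∈ 𝓑.filter (fun B => u ∈ B ∧ v ∈ B), z B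

def Dominated (w : Sym2 V → ℝ) (y : V → ℝ) (𝓑 : Finset (Finset V)) (z : Finset V → ℝ)
    (u v : V) : Prop :=
  w s(u, v) ≤ dualLoad y 𝓑 z u v

def Tight (w : Sym2 V → ℝ) (y : V → ℝ) (𝓑 : Finset (Finset V)) (z : Finset V → ℝ)
    (u v : V) : Prop :=
  w s(u, v) = dualLoad y 𝓑 z u v


section Helpers

lemma walk_support_getElem {G : SimpleGraph V} {u v : V} (p : G.Walk u v) :
    ∀ (i : ℕ) (h : i < p.support.length), p.support[i] = p.getVert i := by
  induction p with
  | nil => intro i h; simp [Walk.support_nil] at h; subst h; rfl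
  | cons ha q ih =>
    intro i hi
    cases i with
    | zero => rfl
    | succ n =>
      simp only [Walk.support_cons, List.getElem_cons_succ, Walk.getVert_cons_succ]
      apply ih

lemma walk_edges_getElem {G : SimpleGraph V} {u v : V} (p : G.Walk u v) :
    ∀ (i : ℕ) (h : i < p.edges.length), p.edges[i] = s(p.getVert i, p.getVert (i+1)) := by
  induction p with
  | nil => intro i h; simp [Walk.edges_nil] at h
  | cons ha q ih =>
    intro i hi
    cases i with
    | zero => simp [Walk.edges_cons, Walk.getVert_cons_succ]
    | succ n =>
      simp only [Walk.edges_cons, List.getElem_cons_succ, Walk.getVert_cons_succ]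
      apply ih

lemma alt_telescope (g : ℕ → ℝ) :
    ∀ n, ∑ i ∈ Finset.range n, (-1:ℝ)^i * (g i + g (i+1)) = g 0 - (-1)^n * g n := by
  intro n
  induction n with
  | zero => simp
  | succ n ih => rw [Finset.sum_range_succ, ih, pow_succ]; ring

lemma sum_if_odd_eq (m : ℕ) :
    ∑ i ∈ Finset.range (2*m+1), (if Odd i then (-2:ℝ) else 0) = -2*m := by
  induction m with
  | zero => simp
  | succ m ih =>
    have h : 2*(m+1)+1 = (2*m+1) + 1 + 1 := by ring
    rw [h, Finset.sum_range_succ, Finset.sum_range_succ, ih]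
    have h1 : Odd (2*m+1) := ⟨m, by ring⟩
    have h2 : ¬ Odd (2*m+1+1) := by
      simp only [Nat.odd_add_one, Nat.not_even_iff_odd] at *
      simp [h1]
    rw [if_pos h1, if_neg h2]
    push_cast; ring

/-- Key combinatorial lemma: along an augmenting path, within any
internally near-matched set `B`, the matched edges (odd positions)
outnumber the unmatched ones (even positions). -/
lemma key_count (k : ℕ) (vv : ℕ → V) (M : Finset (Sym2 V)) (B : Finset V) (b : V)
    (hMu : ∀ e ∈ M, ∀ f ∈ M, ∀ x : V, x ∈ e → x ∈ f → e = f)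
    (hnm : InternallyNearMatched M B b)
    (vinj : ∀ i j, i ≤ k → j ≤ k → vv i = vv j → i = j)
    (hparity : ∀ i, i < k → (s(vv i, vv (i+1)) ∈ M ↔ Odd i))
    (hfree1 : IsFree M (vv 0)) (hfree2 : IsFree M (vv k)) :
    ∑ i ∈ (Finset.range k).filter (fun i => vv i ∈ B ∧ vv (i+1) ∈ B), (-1:ℝ)^i ≤ 0 := by
  classical
  obtain ⟨hbB, hbM, hmatch⟩ := hnm
  set T : Finset ℕ := (Finset.range k).filter (fun i => vv i ∈ B ∧ vv (i+1) ∈ B) with hT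
  set TO : Finset ℕ := T.filter (fun i => Odd i) with hTO
  set TE : Finset ℕ := T.filter (fun i => ¬ Odd i) with hTE
  set W : Finset ℕ := (Finset.range (k+1)).filter (fun j => vv j ∈ B ∧ vv j ≠ b) with hW
  have hTmem : ∀ i, i ∈ T ↔ (i < k ∧ vv i ∈ B ∧ vv (i+1) ∈ B) := by
    intro i; simp [hT, Finset.mem_filter, Finset.mem_range, and_assoc]
  have hWmem : ∀ j, j ∈ W ↔ (j ≤ k ∧ vv j ∈ B ∧ vv j ≠ b) := by
    intro j; simp [hW, Finset.mem_filter, Finset.mem_range, Nat.lt_succ_iff, and_assoc]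
  -- the endpoints of matched path edges inside B avoid b
  have hMnotb : ∀ i ∈ TO, vv i ≠ b ∧ vv (i+1) ≠ b := by
    intro i hi
    rw [hTO, Finset.mem_filter] at hi
    obtain ⟨hiT, hodd⟩ := hi
    rw [hTmem] at hiT
    obtain ⟨hik, hB1, hB2⟩ := hiT
    have hmem : s(vv i, vv (i+1)) ∈ M := (hparity i hik).2 hodd
    constructor
    · intro hb; apply hbM (vv (i+1)) hB2; rw [← hb]; exact hmem
    · intro hb; apply hbM (vv i) hB1; rw [← hb, Sym2.eq_swap]; exact hmem
  -- W is exactly the union of the vertex-pairs of matched path edges in B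
  have hWeq : W = TO.biUnion (fun i => {i, i+1}) := by
    ext j
    rw [hWmem, Finset.mem_biUnion]
    constructor
    · rintro ⟨hjk, hjB, hjb⟩
      obtain ⟨u, huB, hune, huM⟩ := hmatch (vv j) hjB hjb
      have hj0 : j ≠ 0 := by
        intro h0; subst h0
        exact hfree1 _ huM (Sym2.mem_mk_right _ _)
      have hjk' : j ≠ k := by
        intro h0; subst h0
        exact hfree2 _ huM (Sym2.mem_mk_right _ _)
      by_cases hodd : Odd j
      · -- the matched edge at vv j is s(vv j, vv (j+1))
        have hjlt : j < k := lt_of_le_of_ne hjk hjk'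
        have hmem : s(vv j, vv (j+1)) ∈ M := (hparity j hjlt).2 hodd
        have heq : s(vv j, vv (j+1)) = s(u, vv j) :=
          hMu _ hmem _ huM (vv j) (Sym2.mem_mk_left _ _) (Sym2.mem_mk_right _ _)
        have hu : vv (j+1) = u := by
          rw [Sym2.eq_iff] at heq
          rcases heq with ⟨h1, h2⟩ | ⟨h1, h2⟩
          · exfalso
            have := vinj (j+1) j (by omega) (by omega) h2
            omega
          · exact h2
        refine ⟨j, ?_, by simp⟩
        rw [hTO, Finset.mem_filter, hTmem]
        exact ⟨⟨hjlt, hjB, hu ▸ huB⟩, hodd⟩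
      · -- the matched edge at vv j is s(vv (j-1), vv j)
        have hj1 : 1 ≤ j := Nat.one_le_iff_ne_zero.2 hj0
        set i := j - 1 with hi
        have hji : j = i + 1 := by omega
        have hodd' : Odd i := by
          rw [Nat.not_odd_iff_even] at hodd
          rcases Nat.even_or_odd i with he | ho
          · exfalso; rw [Nat.even_iff] at hodd he; omega
          · exact ho
        have hilt : i < k := by omega
        have hmem : s(vv i, vv (i+1)) ∈ M := (hparity i hilt).2 hodd'
        rw [← hji] at hmem
        have hmem' : s(vv i, vv j) ∈ M := by rw [hji]; rw [hji] at hmem; exact hmem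
        have heq : s(vv i, vv j) = s(u, vv j) :=
          hMu _ hmem' _ huM (vv j) (Sym2.mem_mk_right _ _) (Sym2.mem_mk_right _ _)
        have hu : vv i = u := by
          rw [Sym2.eq_iff] at heq
          rcases heq with ⟨h1, h2⟩ | ⟨h1, h2⟩
          · exact h1
          · exfalso
            have := vinj i j (by omega) (by omega) h1
            omega
        refine ⟨i, ?_, by simp [hji]⟩
        rw [hTO, Finset.mem_filter, hTmem]
        refine ⟨⟨hilt, hu ▸ huB, ?_⟩, hodd'⟩
        rw [← hji]; exact hjB
    · rintro ⟨i, hiTO, hj⟩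
      have hnb := hMnotb i hiTO
      rw [hTO, Finset.mem_filter] at hiTO
      obtain ⟨hiT, hodd⟩ := hiTO
      rw [hTmem] at hiT
      obtain ⟨hik, hB1, hB2⟩ := hiT
      simp only [Finset.mem_insert, Finset.mem_singleton] at hj
      rcases hj with rfl | rfl
      · exact ⟨by omega, hB1, hnb.1⟩
      · exact ⟨by omega, hB2, hnb.2⟩
  -- cardinality of W is twice the number of matched path edges in B
  have hdisj : ∀ i ∈ TO, ∀ j ∈ TO, i ≠ j →
      Disjoint ({i, i+1} : Finset ℕ) {j, j+1} := by
    intro i hi j hj hij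
    have hoi : Odd i := (Finset.mem_filter.1 hi).2
    have hoj : Odd j := (Finset.mem_filter.1 hj).2
    rw [Finset.disjoint_left]
    intro a ha ha'
    simp only [Finset.mem_insert, Finset.mem_singleton] at ha ha'
    obtain ⟨ci, hci⟩ := hoi
    obtain ⟨cj, hcj⟩ := hoj
    omega
  have hWcard : W.card = 2 * TO.card := by
    rw [hWeq, Finset.card_biUnion hdisj]
    have hc2 : ∀ i ∈ TO, ({i, i+1} : Finset ℕ).card = 2 := by
      intro i _
      rw [Finset.card_insert_of_notMem (by simp), Finset.card_singleton]
    rw [Finset.sum_congr rfl hc2, Finset.sum_const, smul_eq_mul, mul_comm]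
  -- T injects into W
  have hTW : T.card ≤ W.card := by
    by_cases hc : ∃ p ∈ T, vv p = b
    · obtain ⟨p, hpT, hpb⟩ := hc
      rw [hTmem] at hpT
      obtain ⟨hpk, hpB1, hpB2⟩ := hpT
      apply Finset.card_le_card_of_injOn (fun i => i + 1)
      · intro i hiT
        simp only [Finset.mem_coe] at hiT ⊢
        rw [hTmem] at hiT
        obtain ⟨hik, hB1, hB2⟩ := hiT
        rw [hWmem]
        refine ⟨by omega, hB2, ?_⟩
        intro hib
        have hip : i + 1 = p := vinj (i+1) p (by omega) (by omega) (by rw [hib, hpb])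
        -- edges p and p-1 = i are both incident to b within B, hence unmatched :
        -- contradicts alternation parity
        have h1 : s(vv p, vv (p+1)) ∉ M := by
          rw [hpb]; exact hbM (vv (p+1)) hpB2
        have h2 : s(vv i, vv (i+1)) ∉ M := by
          rw [hib, Sym2.eq_swap]; exact hbM (vv i) hB1
        have ho1 : ¬ Odd p := fun h => h1 ((hparity p hpk).2 h)
        have ho2 : ¬ Odd i := fun h => h2 ((hparity i hik).2 h)
        rw [Nat.not_odd_iff_even, Nat.even_iff] at ho1 ho2
        omega
      · intro a _ c _ h
        simp only at h
        omega
    · push_neg at hc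
      apply Finset.card_le_card_of_injOn (fun i => i)
      · intro i hiT
        have h := hc i hiT
        simp only [Finset.mem_coe] at hiT ⊢
        rw [hTmem] at hiT
        rw [hWmem]
        exact ⟨by omega, hiT.2.1, h⟩
      · intro a _ c _ h
        exact h
  -- conclude
  have hsplit : TO.card + TE.card = T.card := by
    rw [hTO, hTE]
    exact Finset.card_filter_add_card_filter_not _
  have hle : TE.card ≤ TO.card := by omega
  have hsum : ∑ i ∈ T, (-1:ℝ)^i = -(TO.card : ℝ) + (TE.card : ℝ) := by
    rw [← Finset.sum_filter_add_sum_filter_not T (fun i => Odd i)]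
    rw [← hTO, ← hTE]
    have e1 : ∑ i ∈ TO, (-1:ℝ)^i = -(TO.card : ℝ) := by
      rw [Finset.sum_congr rfl (fun i hi => Odd.neg_one_pow (Finset.mem_filter.1 hi).2)]
      simp [← hTO]
    have e2 : ∑ i ∈ TE, (-1:ℝ)^i = (TE.card : ℝ) := by
      rw [Finset.sum_congr rfl (fun i hi => Even.neg_one_pow
        (Nat.not_odd_iff_even.1 (Finset.mem_filter.1 hi).2))]
      rw [Finset.sum_const, nsmul_eq_mul, mul_one]
    rw [e1, e2]
  rw [hsum]
  have : (TE.card : ℝ) ≤ (TO.card : ℝ) := by exact_mod_cast hle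
  linarith

end Helpers

theorem free_dual_lower_bound
    {V : Type*} [Fintype V] (G : SimpleGraph V) (M : Finset (Sym2 V))
    (w : Sym2 V → ℝ) (y : V → ℝ) (𝓑 : Finset (Finset V)) (z : Finset V → ℝ)
    (base : Finset V → V)
    (hM : IsMatchingSet G M)
    (hw : ∀ e : Sym2 V, (e ∈ M → w e = 2) ∧ (e ∉ M → w e = 0))
    (h𝓑 : ∀ B ∈ 𝓑, InternallyNearMatched M B (base B))
    (hz : ∀ B ∈ 𝓑, 0 ≤ z B)
    (hdom : ∀ u v : V, G.Adj u v → Dominated w y 𝓑 z u v)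
    (htight : ∀ u v : V, s(u, v) ∈ M → Tight w y 𝓑 z u v)
    {f₁ f₂ : V} (P : G.Walk f₁ f₂) (hP : IsAugmenting M P) :
    y f₁ + y f₂ ≥ 2 - (Fintype.card V : ℝ) ∧
      ∀ yf : ℝ, (∀ f : V, IsFree M f → y f = yf) →
        yf ≥ 1 - (Fintype.card V : ℝ) / 2 := by
  classical
  obtain ⟨hpath, hne, hfr1, hfr2, halt⟩ := hP
  set k := P.length with hk
  have hv0 : P.getVert 0 = f₁ := Walk.getVert_zero P
  have hvk : P.getVert k = f₂ := Walk.getVert_length P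
  have hnodup : P.support.Nodup := hpath.support_nodup
  have vinj : ∀ i j, i ≤ k → j ≤ k → P.getVert i = P.getVert j → i = j := by
    intro i j hi hj h
    have hi' : i < P.support.length := by rw [Walk.length_support]; omega
    have hj' : j < P.support.length := by rw [Walk.length_support]; omega
    have h2 : P.support[i] = P.support[j] := by
      rw [walk_support_getElem P i hi', walk_support_getElem P j hj']; exact h
    exact (hnodup.getElem_inj_iff).mp h2
  have hMu : ∀ e ∈ M, ∀ f ∈ M, ∀ x : V, x ∈ e → x ∈ f → e = f := by
    intro e he f hf x hxe hxf
    by_contra hef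
    exact hM.2 e he f hf hef x hxe hxf
  have hparity : ∀ i, i < k → (s(P.getVert i, P.getVert (i+1)) ∈ M ↔ Odd i) := by
    intro i
    induction i with
    | zero =>
      intro h0
      apply iff_of_false
      · intro hmem
        exact hfr1 _ hmem (Sym2.mem_iff.2 (Or.inl hv0.symm))
      · simp
    | succ n ihn =>
      intro hn1
      have hnk : n < k := by omega
      have hlen : n < P.edges.length - 1 := by
        rw [Walk.length_edges]; omega
      have hchain : ¬(P.edges[n] ∈ M ↔ P.edges[n+1] ∈ M) :=
        List.isChain_iff_getElem.mp halt n (by omega)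
      rw [walk_edges_getElem P n (by omega), walk_edges_getElem P (n+1) (by omega)] at hchain
      have hn := ihn hnk
      rw [Nat.odd_add_one, Nat.not_odd_iff_even, ← Nat.not_odd_iff_even]
      tauto
  have hk1 : 1 ≤ k := by
    by_contra h
    have hk0 : k = 0 := by omega
    apply hne
    exact hv0.symm.trans (hk0 ▸ hvk)
  have hkodd : Odd k := by
    have hlast : s(P.getVert (k-1), P.getVert (k-1+1)) ∉ M := by
      intro hmem
      have hkk : k - 1 + 1 = k := by omega
      apply hfr2 _ hmem
      rw [hkk, hvk]
      exact Sym2.mem_mk_right _ _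
    have h := (hparity (k-1) (by omega))
    have : ¬ Odd (k-1) := fun hh => hlast (h.2 hh)
    rw [Nat.not_odd_iff_even, Nat.even_iff] at this
    rw [Nat.odd_iff]
    omega
  have hadj : ∀ i, i < k → G.Adj (P.getVert i) (P.getVert (i+1)) := by
    intro i hi
    exact Walk.adj_getVert_succ P hi
  -- abbreviation for the blossom dual contribution along edge i
  set Z : ℕ → ℝ := fun i =>
    ∑ B ∈ 𝓑.filter (fun B => P.getVert i ∈ B ∧ P.getVert (i+1) ∈ B), z B with hZ
  -- telescoping identity
  have htel : ∑ i ∈ Finset.range k, (-1:ℝ)^i * (y (P.getVert i) + y (P.getVert (i+1)))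
      = y f₁ + y f₂ := by
    rw [alt_telescope (fun i => y (P.getVert i)) k]
    rw [Odd.neg_one_pow hkodd, hv0, hvk]
    ring
  -- per-edge inequality
  have hedge : ∀ i ∈ Finset.range k,
      (if Odd i then (-2:ℝ) else 0) - (-1:ℝ)^i * Z i
        ≤ (-1:ℝ)^i * (y (P.getVert i) + y (P.getVert (i+1))) := by
    intro i hi
    rw [Finset.mem_range] at hi
    by_cases hodd : Odd i
    · have hmem : s(P.getVert i, P.getVert (i+1)) ∈ M := (hparity i hi).2 hodd
      have ht := htight _ _ hmem
      rw [Tight, (hw _).1 hmem, dualLoad] at ht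
      rw [if_pos hodd, Odd.neg_one_pow hodd, hZ]
      linarith
    · have hmem : s(P.getVert i, P.getVert (i+1)) ∉ M := fun h => hodd ((hparity i hi).1 h)
      have hd := hdom _ _ (hadj i hi)
      rw [Dominated, (hw _).2 hmem, dualLoad] at hd
      rw [if_neg hodd, Even.neg_one_pow (Nat.not_odd_iff_even.1 hodd), hZ]
      linarith
  -- the blossom contribution is nonpositive
  have hZsum : ∑ i ∈ Finset.range k, (-1:ℝ)^i * Z i ≤ 0 := by
    have hstep : ∀ i, (-1:ℝ)^i * Z i
        = ∑ B ∈ 𝓑, (if P.getVert i ∈ B ∧ P.getVert (i+1) ∈ B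
            then (-1:ℝ)^i * z B else 0) := by
      intro i
      simp only [hZ]
      rw [Finset.mul_sum, Finset.sum_filter]
    rw [Finset.sum_congr rfl (fun i _ => hstep i), Finset.sum_comm]
    apply Finset.sum_nonpos
    intro B hB
    have hfree1' : IsFree M (P.getVert 0) := by rw [hv0]; exact hfr1
    have hfree2' : IsFree M (P.getVert k) := by rw [hvk]; exact hfr2
    have hkey := key_count k P.getVert M B (base B) hMu (h𝓑 B hB) vinj hparity
      hfree1' hfree2'
    have hrw : ∑ i ∈ Finset.range k,
        (if P.getVert i ∈ B ∧ P.getVert (i+1) ∈ B then (-1:ℝ)^i * z B else 0)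
        = (∑ i ∈ (Finset.range k).filter
            (fun i => P.getVert i ∈ B ∧ P.getVert (i+1) ∈ B), (-1:ℝ)^i) * z B := by
      rw [← Finset.sum_filter, Finset.sum_mul]
    rw [hrw]
    have := mul_le_mul_of_nonneg_right hkey (hz B hB)
    simpa using this
  -- assemble
  have hsum_le : ∑ i ∈ Finset.range k,
      ((if Odd i then (-2:ℝ) else 0) - (-1:ℝ)^i * Z i) ≤ y f₁ + y f₂ := by
    rw [← htel]
    exact Finset.sum_le_sum hedge
  obtain ⟨m, hm⟩ := hkodd
  have hif : ∑ i ∈ Finset.range k, (if Odd i then (-2:ℝ) else 0) = -2*(m:ℝ) := by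
    rw [hm]; exact sum_if_odd_eq m
  have hsplit : ∑ i ∈ Finset.range k,
      ((if Odd i then (-2:ℝ) else 0) - (-1:ℝ)^i * Z i)
      = (∑ i ∈ Finset.range k, (if Odd i then (-2:ℝ) else 0))
        - ∑ i ∈ Finset.range k, (-1:ℝ)^i * Z i :=
    Finset.sum_sub_distrib _ _
  have hcard : k + 1 ≤ Fintype.card V := by
    have h := hnodup.length_le_card
    rwa [Walk.length_support] at h
  have main : y f₁ + y f₂ ≥ 2 - (Fintype.card V : ℝ) := by
    have hcast : (k:ℝ) + 1 ≤ (Fintype.card V : ℝ) := by exact_mod_cast hcard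
    have hk' : (k:ℝ) = 2*(m:ℝ)+1 := by exact_mod_cast hm
    linarith [hsum_le, hsplit, hif, hZsum]
  refine ⟨main, ?_⟩
  intro yf hyf
  have h1 := hyf f₁ hfr1
  have h2 := hyf f₂ hfr2
  rw [h1, h2] at main
  linarith
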